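/- Let C₁ = {1,2,3,4}, C₂ = {4,5,6,7}, C₃ = {7,8,9,10}, C₄ = {10,11,12,13}, C₅ = {13,14,15,16}, C₆ = {16,17,18,1}, C₇ = {2,9,11,18}, C₈ = {3,5,12,14}, C₉ = {6,8,15,17} be the nine contexts of the Cabello 18-vector system, and let T be the simple graph on Fin 18 in which distinct i, j are adjacent iff i and j lie together in at least one context (i.e. T is the union of the nine 4-cliques determined by the contexts). Then T is a subgraph of the orthogonality graph KS⁴₁₈ of the eighteen Cabello vectors, T has 54 edges while KS⁴₁₈ has 63 edges, and the chromatic number of T equals 5. -/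

import Mathlib

/-- The orthogonality graph of a finite list of vectors in `ℝ^d`: distinct indices
are adjacent iff the corresponding vectors have dot product `0`. -/
def orthoGraph {m d : ℕ} (v : Fin m → Fin d → ℝ) : SimpleGraph (Fin m) where
  Adj i j := i ≠ j ∧ ∑ a, v i a * v j a = 0
  symm := by
    constructor
    rintro i j ⟨hne, hdot⟩
    refine ⟨hne.symm, ?_⟩
    rw [Finset.sum_congr rfl fun a _ => mul_comm (v j a) (v i a)]
    exact hdot
  loopless := by constructor; rintro i ⟨h, -⟩; exact h rfl

/-- The 18 Cabello vectors in `ℝ⁴`, indexed so that the label `i ∈ {1, …, 18}`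
(taken mod 18, so label `18` is the index `0`) corresponds to `vᵢ`; i.e. index `0`
carries `v₁₈ = (0,0,0,1)` and index `k` carries `v_k` for `1 ≤ k ≤ 17`. -/
def cabelloVecs : Fin 18 → Fin 4 → ℝ :=
  ![![0, 0, 0, 1], ![1, 0, 0, 0], ![0, 1, 0, 0], ![0, 0, 1, 1], ![0, 0, 1, -1],
    ![1, -1, 0, 0], ![1, 1, -1, -1], ![1, 1, 1, 1], ![1, -1, 1, -1], ![1, 0, -1, 0],
    ![0, 1, 0, -1], ![1, 0, 1, 0], ![1, 1, -1, 1], ![-1, 1, 1, 1], ![1, 1, 1, -1],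
    ![1, 0, 0, 1], ![0, 1, -1, 0], ![0, 1, 1, 0]]

/-- The nine contexts of the Cabello 18-vector Kochen–Specker system, as subsets of
`Fin 18` (labels taken mod 18, so the label `18` is `0`). -/
def cabelloContexts : Fin 9 → Finset (Fin 18) :=
  ![{1, 2, 3, 4}, {4, 5, 6, 7}, {7, 8, 9, 10}, {10, 11, 12, 13}, {13, 14, 15, 16},
    {16, 17, 18, 1}, {2, 9, 11, 18}, {3, 5, 12, 14}, {6, 8, 15, 17}]

/-- The graph `T` on `Fin 18`: distinct `i, j` adjacent iff they lie together in at
least one Cabello context (the union of the nine 4-cliques given by the contexts). -/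
def contextGraph : SimpleGraph (Fin 18) :=
  SimpleGraph.fromRel (fun i j => ∃ k : Fin 9, i ∈ cabelloContexts k ∧ j ∈ cabelloContexts k)

def wInt : Fin 18 → Fin 4 → ℤ :=
  ![![0, 0, 0, 1], ![1, 0, 0, 0], ![0, 1, 0, 0], ![0, 0, 1, 1], ![0, 0, 1, -1],
    ![1, -1, 0, 0], ![1, 1, -1, -1], ![1, 1, 1, 1], ![1, -1, 1, -1], ![1, 0, -1, 0],
    ![0, 1, 0, -1], ![1, 0, 1, 0], ![1, 1, -1, 1], ![-1, 1, 1, 1], ![1, 1, 1, -1],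
    ![1, 0, 0, 1], ![0, 1, -1, 0], ![0, 1, 1, 0]]

lemma cabello_cast : ∀ i a, cabelloVecs i a = (wInt i a : ℝ) := by
  intro i a
  fin_cases i <;> fin_cases a <;> norm_num [cabelloVecs, wInt]

lemma ortho_adj_iff (i j : Fin 18) :
    (orthoGraph cabelloVecs).Adj i j ↔ i ≠ j ∧ ∑ a, wInt i a * wInt j a = 0 := by
  show (i ≠ j ∧ _) ↔ _
  have h : (∑ a, cabelloVecs i a * cabelloVecs j a)
      = ((∑ a, wInt i a * wInt j a : ℤ) : ℝ) := by
    push_cast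
    exact Finset.sum_congr rfl fun a _ => by rw [cabello_cast, cabello_cast]
  rw [h]
  exact and_congr Iff.rfl (by exact_mod_cast Iff.rfl)

instance : DecidableRel (orthoGraph cabelloVecs).Adj :=
  fun i j => decidable_of_iff _ (ortho_adj_iff i j).symm

instance : DecidableRel contextGraph.Adj :=
  fun i j => decidable_of_iff
    (i ≠ j ∧ ((∃ k : Fin 9, i ∈ cabelloContexts k ∧ j ∈ cabelloContexts k) ∨
      (∃ k : Fin 9, j ∈ cabelloContexts k ∧ i ∈ cabelloContexts k))) Iff.rfl

lemma sub_ortho : contextGraph ≤ orthoGraph cabelloVecs := by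
  intro i j h
  rw [ortho_adj_iff]
  revert h
  show contextGraph.Adj i j → _
  revert i j
  decide

def col5 : Fin 18 → Fin 5 :=
  ![0, 1, 2, 0, 3, 1, 0, 2, 1, 3, 0, 4, 2, 1, 3, 2, 4, 3]

lemma col5_proper : ∀ i j, contextGraph.Adj i j → col5 i ≠ col5 j := by decide

lemma clique_ctx : ∀ (k : Fin 9), ∀ i ∈ cabelloContexts k, ∀ j ∈ cabelloContexts k,
    i ≠ j → contextGraph.Adj i j := by decide

lemma ctx_card : ∀ k : Fin 9, (cabelloContexts k).card = 4 := by decide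

lemma mem_two : ∀ i : Fin 18,
    (Finset.univ.filter (fun k : Fin 9 => i ∈ cabelloContexts k)).card = 2 := by decide

lemma not_colorable_four : ¬ contextGraph.Colorable 4 := by
  rintro ⟨c⟩
  -- each context contains exactly one vertex of color 0
  have key : ∀ k : Fin 9,
      ((cabelloContexts k).filter (fun i => c i = 0)).card = 1 := by
    intro k
    have hinj : Set.InjOn c (cabelloContexts k) := by
      intro i hi j hj hc
      by_contra hne
      exact c.valid (clique_ctx k i hi j hj hne) hc
    have himg : (cabelloContexts k).image c = Finset.univ := by
      apply Finset.eq_univ_of_card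
      rw [Finset.card_image_of_injOn hinj, ctx_card]
      simp
    have h0 : (0 : Fin 4) ∈ (cabelloContexts k).image c := by rw [himg]; exact Finset.mem_univ _
    obtain ⟨i, hi, hci⟩ := Finset.mem_image.mp h0
    refine le_antisymm ?_ ?_
    · apply Finset.card_le_one.mpr
      intro a ha b hb
      simp only [Finset.mem_filter] at ha hb
      exact hinj ha.1 hb.1 (ha.2.trans hb.2.symm)
    · exact Finset.card_pos.mpr ⟨i, Finset.mem_filter.mpr ⟨hi, hci⟩⟩
  -- double counting
  set S : Finset (Fin 18) := Finset.univ.filter (fun i => c i = 0) with hS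
  have count : ∑ k : Fin 9, ((cabelloContexts k).filter (fun i => c i = 0)).card
      = 2 * S.card := by
    have : ∀ k : Fin 9, ((cabelloContexts k).filter (fun i => c i = 0)).card
        = ∑ i ∈ S, if i ∈ cabelloContexts k then 1 else 0 := by
      intro k
      rw [← Finset.card_filter]
      congr 1
      ext i
      simp [hS, and_comm]
    rw [Finset.sum_congr rfl fun k _ => this k, Finset.sum_comm]
    rw [Finset.sum_congr rfl (fun i _ => by
      rw [← Finset.card_filter, mem_two i])]
    rw [Finset.sum_const, smul_eq_mul, mul_comm]
  have h9 : ∑ k : Fin 9, ((cabelloContexts k).filter (fun i => c i = 0)).card = 9 := by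
    rw [Finset.sum_congr rfl fun k _ => key k]; simp
  omega

/-- The context graph `T` of the Cabello system is a subgraph of
the orthogonality graph `KS⁴₁₈`; `T` has `54` edges while `KS⁴₁₈` has `63`; and the
chromatic number of `T` equals `5`. -/
theorem stmt_18 :
    contextGraph ≤ orthoGraph cabelloVecs ∧
    contextGraph.edgeSet.ncard = 54 ∧
    (orthoGraph cabelloVecs).edgeSet.ncard = 63 ∧
    contextGraph.chromaticNumber = 5 := by
  refine ⟨sub_ortho, ?_, ?_, ?_⟩
  · rw [Set.ncard_eq_toFinset_card', ← SimpleGraph.edgeFinset]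
    decide
  · rw [Set.ncard_eq_toFinset_card', ← SimpleGraph.edgeFinset]
    decide
  · refine le_antisymm ?_ ?_
    · exact SimpleGraph.Colorable.chromaticNumber_le ⟨⟨col5, fun h => col5_proper _ _ h⟩⟩
    · by_contra h
      push_neg at h
      have : contextGraph.chromaticNumber ≤ 4 := by
        exact Order.le_of_lt_add_one (by exact_mod_cast h)
      exact not_colorable_four (SimpleGraph.chromaticNumber_le_iff_colorable.mp this)
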